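/- arXiv:math/0701639 — 2 statements merged into one kernel-verified Lean document; each statement's English description precedes it below -/
import Mathlib

section
/- Let f : Δ → Δ be a holomorphic self-map of a bounded domain in ℂ^k and suppose some subsequence of the iterates f^{n_i} converges locally uniformly to the identity map of Δ. Then f is injective on Δ and f(Δ) = Δ, i.e. f is an automorphism of Δ. -/
open Set Filter

/-- Cartan / Siegel-domain alternative: if `Δ ⊆ ℂ^k` is a bounded domain,
`f : Δ → Δ` is holomorphic, and some subsequence of the iterates converges locally
uniformly to the identity on `Δ`, then `f` is an automorphism of `Δ`. -/
theorem stmt4 {k : ℕ} (Δ : Set (Fin k → ℂ)) (f : (Fin k → ℂ) → (Fin k → ℂ))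
    (n : ℕ → ℕ)
    (hopen : IsOpen Δ) (hconn : IsConnected Δ) (hbdd : Bornology.IsBounded Δ)
    (hf : DifferentiableOn ℂ f Δ) (hmaps : MapsTo f Δ Δ)
    (hn : StrictMono n)
    (hconv : TendstoLocallyUniformlyOn (fun i => f^[n i]) id atTop Δ) :
    InjOn f Δ ∧ f '' Δ = Δ := by
  -- iterates are differentiable on Δ
  have hiter : ∀ m : ℕ, DifferentiableOn ℂ (f^[m]) Δ := by
    intro m
    induction m with
    | zero => simpa using differentiableOn_id
    | succ m ih =>
      rw [Function.iterate_succ']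
      exact hf.comp ih (hmaps.iterate m)
  constructor
  · -- injectivity
    intro a ha b hb hab
    have hseq : ∀ i, 1 ≤ n i → f^[n i] a = f^[n i] b := by
      intro i hi
      obtain ⟨m, hm⟩ : ∃ m, n i = m + 1 := ⟨n i - 1, (Nat.succ_pred_eq_of_pos hi).symm⟩
      rw [hm]
      simp only [Function.iterate_succ, Function.comp_apply, hab]
    have ha' : Tendsto (fun i => f^[n i] a) atTop (nhds a) := hconv.tendsto_at ha
    have hb' : Tendsto (fun i => f^[n i] b) atTop (nhds b) := hconv.tendsto_at hb
    have : Tendsto (fun i => f^[n i] a) atTop (nhds b) := by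
      refine hb'.congr' ?_
      filter_upwards [eventually_ge_atTop 1] with i hi
      exact (hseq i (hi.trans (hn.le_apply))).symm
    exact tendsto_nhds_unique ha' this
  · -- surjectivity
    refine Subset.antisymm (image_subset_iff.2 hmaps) ?_
    intro y hy
    -- choose a small ball around y inside Δ
    obtain ⟨r', hr', hball⟩ := Metric.isOpen_iff.1 hopen y hy
    set r : ℝ := r' / 5 with hrdef
    have hr : 0 < r := by positivity
    have hball4 : Metric.closedBall y (4 * r) ⊆ Δ := by
      refine (Metric.closedBall_subset_ball ?_).trans hball
      rw [hrdef]; linarith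
    -- uniform convergence on this compact ball
    have hcompact : IsCompact (Metric.closedBall y (4 * r)) := isCompact_closedBall _ _
    have huc : TendstoUniformlyOn (fun i => f^[n i]) id atTop (Metric.closedBall y (4 * r)) :=
      (tendstoLocallyUniformlyOn_iff_forall_isCompact hopen).1 hconv _ hball4 hcompact
    have hev : ∀ᶠ i in atTop, ∀ x ∈ Metric.closedBall y (4 * r),
        dist (id x) (f^[n i] x) < r / 2 :=
      (Metric.tendstoUniformlyOn_iff.1 huc (r / 2) (by positivity))
    obtain ⟨i, hi1, hB⟩ := ((eventually_ge_atTop 1).and hev).exists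
    have hni : 1 ≤ n i := hi1.trans hn.le_apply
    set g : (Fin k → ℂ) → (Fin k → ℂ) := f^[n i] with hg
    have hgd : DifferentiableOn ℂ g Δ := hiter (n i)
    have hBg : ∀ x ∈ Metric.closedBall y (4 * r), ‖g x - x‖ < r / 2 := by
      intro x hx
      have := hB x hx
      rwa [id, dist_comm, dist_eq_norm] at this
    -- g approximates the identity on closedBall y r with constant 1/2
    have happrox : ApproximatesLinearOn g
        (ContinuousLinearMap.id ℂ (Fin k → ℂ)) (Metric.closedBall y r) (1/2 : NNReal) := by
      intro x₁ hx₁ x₂ hx₂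
      rcases eq_or_ne x₁ x₂ with rfl | hne
      · simp
      set d : ℝ := ‖x₁ - x₂‖ with hd
      have hd0 : 0 < d := by rwa [hd, norm_sub_pos_iff]
      have hd2r : d ≤ 2 * r := by
        have := dist_triangle x₁ y x₂
        rw [hd, ← dist_eq_norm]
        rw [Metric.mem_closedBall] at hx₁ hx₂
        calc dist x₁ x₂ ≤ dist x₁ y + dist y x₂ := dist_triangle _ _ _
          _ ≤ r + r := add_le_add hx₁ (by rwa [dist_comm])
          _ = 2 * r := by ring
      set R : ℝ := 3 * r / d with hR
      have hR1 : 1 < R := by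
        rw [hR, lt_div_iff₀ hd0]
        linarith
      -- the auxiliary one-variable function
      set u : (Fin k → ℂ) → (Fin k → ℂ) := fun x => g x - x with hu
      set φ : ℂ → (Fin k → ℂ) := fun t => u (x₂ + t • (x₁ - x₂)) with hφ
      have hud : DifferentiableOn ℂ u Δ := hgd.sub differentiableOn_id
      have hmem : ∀ t : ℂ, t ∈ Metric.ball (0 : ℂ) R →
          x₂ + t • (x₁ - x₂) ∈ Metric.closedBall y (4 * r) := by
        intro t ht
        rw [Metric.mem_ball, dist_zero_right] at ht
        rw [Metric.mem_closedBall, dist_eq_norm]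
        have : x₂ + t • (x₁ - x₂) - y = (x₂ - y) + t • (x₁ - x₂) := by ring_nf
        rw [this]
        have h1 : ‖x₂ - y‖ ≤ r := by
          rw [← dist_eq_norm]; exact Metric.mem_closedBall.1 hx₂
        have h2 : ‖t • (x₁ - x₂)‖ ≤ R * d := by
          rw [norm_smul, ← hd]
          exact mul_le_mul_of_nonneg_right ht.le hd0.le
        have h3 : R * d = 3 * r := by
          rw [hR]; field_simp
        calc ‖(x₂ - y) + t • (x₁ - x₂)‖ ≤ ‖x₂ - y‖ + ‖t • (x₁ - x₂)‖ := norm_add_le _ _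
          _ ≤ r + 3 * r := add_le_add h1 (h3 ▸ h2)
          _ = 4 * r := by ring
      have hφd : DifferentiableOn ℂ φ (Metric.ball (0 : ℂ) R) := by
        refine DifferentiableOn.comp hud ?_ ?_
        · exact (differentiable_const _).add
            ((differentiable_id.smul_const _)) |>.differentiableOn
        · intro t ht
          exact hball4 (hmem t ht)
      have hφmaps : MapsTo φ (Metric.ball (0 : ℂ) R) (Metric.ball (φ 0) r) := by
        intro t ht
        rw [Metric.mem_ball]
        have h0 : (0 : ℂ) ∈ Metric.ball (0 : ℂ) R := by
          rw [Metric.mem_ball, dist_self]; linarith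
        have e1 : ‖φ t‖ < r / 2 := by
          have := hBg _ (hmem t ht)
          simpa [hφ, hu] using this
        have e2 : ‖φ 0‖ < r / 2 := by
          have := hBg _ (hmem 0 h0)
          simpa [hφ, hu] using this
        calc dist (φ t) (φ 0) ≤ ‖φ t‖ + ‖φ 0‖ := dist_le_norm_add_norm _ _
          _ < r / 2 + r / 2 := add_lt_add e1 e2
          _ = r := by ring
      have h1mem : (1 : ℂ) ∈ Metric.ball (0 : ℂ) R := by
        rw [Metric.mem_ball, dist_zero_right]
        simpa using hR1
      have hschwarz := Complex.dist_le_div_mul_dist_of_mapsTo_ball hφd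
        (hφmaps.mono_right Metric.ball_subset_closedBall) h1mem
      have hφ1 : φ 1 = u x₁ := by simp [hφ]
      have hφ0 : φ 0 = u x₂ := by simp [hφ]
      rw [hφ1, hφ0, dist_eq_norm] at hschwarz
      have hdist1 : dist (1 : ℂ) 0 = 1 := by simp
      rw [hdist1, mul_one] at hschwarz
      have hRval : r / R = d / 3 := by
        rw [hR]; field_simp
      rw [hRval] at hschwarz
      have hgoal : g x₁ - g x₂ - (ContinuousLinearMap.id ℂ (Fin k → ℂ)) (x₁ - x₂)
          = u x₁ - u x₂ := by
        simp [hu]; ring_nf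
      rw [hgoal]
      refine hschwarz.trans ?_
      have hc : ((1/2 : NNReal) : ℝ) = 1/2 := by norm_num
      rw [hc]
      linarith
    -- a nonlinear right inverse of the identity with norm 1
    set idinv : (ContinuousLinearMap.id ℂ (Fin k → ℂ)).NonlinearRightInverse :=
      ⟨id, 1, fun z => by simp, fun z => rfl⟩ with hidinv
    have hsurj := happrox.surjOn_closedBall_of_nonlinearRightInverse idinv hr.le
      (Subset.refl (Metric.closedBall y r))
    have hymem : y ∈ Metric.closedBall (g y) (((idinv.nnnorm : ℝ)⁻¹ - (1/2 : NNReal)) * r) := by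
      have : ((idinv.nnnorm : ℝ)⁻¹ - ((1/2 : NNReal) : ℝ)) * r = r / 2 := by
        rw [hidinv]
        push_cast
        norm_num
        ring
      rw [this, Metric.mem_closedBall, dist_comm]
      have hy4 : y ∈ Metric.closedBall y (4 * r) := by
        rw [Metric.mem_closedBall, dist_self]; positivity
      have := hB y hy4
      simpa [dist_comm] using this.le
    obtain ⟨x, hx, hgx⟩ := hsurj hymem
    have hxΔ : x ∈ Δ := hball4 (Metric.closedBall_subset_closedBall (by linarith) hx)
    -- y = f (f^[n i - 1] x)
    obtain ⟨m, hm⟩ : ∃ m, n i = m + 1 := ⟨n i - 1, (Nat.succ_pred_eq_of_pos hni).symm⟩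
    refine ⟨f^[m] x, hmaps.iterate m hxΔ, ?_⟩
    have : g x = f (f^[m] x) := by
      rw [hg, hm, Function.iterate_succ_apply']
    rw [← this, hgx]
end

section
/- Let U be a bounded open subset of ℂ^k containing 0, f : U → ℂ^k holomorphic with f(0) = 0 and A = Df(0) invertible with all eigenvalues of modulus 1 and A diagonalizable (so that the powers A^{-j} are uniformly bounded). Suppose there exist radii 0 < r < R with the closed ball B(0,R) ⊆ U such that f^n(B(0,r)) ⊆ B(0,R) for all n ≥ 0. Then f is linearizable near 0: there exists a holomorphic map h defined on a neighborhood of 0 with h(0) = 0, Dh(0) = Id, and h ∘ f = A ∘ h. -/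
open Set Filter Metric Topology
set_option maxHeartbeats 2000000

lemma cauchy_fderiv_bound {k : ℕ} (g : (Fin k → ℂ) → (Fin k → ℂ)) (ρ M : ℝ)
    (hρ : 0 < ρ) (hM : 0 ≤ M)
    (hg : DifferentiableOn ℂ g (ball (0 : Fin k → ℂ) ρ))
    (hb : ∀ z ∈ ball (0 : Fin k → ℂ) ρ, ‖g z‖ ≤ M) :
    ∀ z ∈ ball (0 : Fin k → ℂ) (ρ/2), ‖fderiv ℂ g z‖ ≤ 4 * M / ρ := by
  intro z hz
  rw [mem_ball_zero_iff] at hz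
  have hδ : (0:ℝ) < ρ/2 := by linarith
  have hzρ : z ∈ ball (0 : Fin k → ℂ) ρ := by
    rw [mem_ball_zero_iff]; linarith
  have key : ∀ v : Fin k → ℂ, ‖v‖ ≤ 1 → ‖fderiv ℂ g z v‖ ≤ 4 * M / ρ := by
    intro v hv
    set φ : ℂ → (Fin k → ℂ) := fun t => g (z + t • v) with hφ
    have hmem : ∀ t : ℂ, t ∈ ball (0:ℂ) (ρ/2) → z + t • v ∈ ball (0 : Fin k → ℂ) ρ := by
      intro t ht
      rw [mem_ball_zero_iff] at ht ⊢
      calc ‖z + t • v‖ ≤ ‖z‖ + ‖t • v‖ := norm_add_le _ _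
        _ ≤ ‖z‖ + ‖t‖ * ‖v‖ := by rw [norm_smul]
        _ ≤ ‖z‖ + ‖t‖ * 1 := by nlinarith [norm_nonneg t]
        _ < ρ := by rw [mul_one]; linarith
    have hφd : DifferentiableOn ℂ φ (ball (0:ℂ) (ρ/2)) := by
      intro t ht
      have h1 : DifferentiableAt ℂ g (z + t • v) :=
        hg.differentiableAt (isOpen_ball.mem_nhds (hmem t ht))
      have h2 : DifferentiableAt ℂ (fun t : ℂ => z + t • v) t :=
        DifferentiableAt.const_add (c := z) (differentiableAt_id.smul_const v)
      exact (h1.comp t h2).differentiableWithinAt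
    have hDφ : HasDerivAt φ (fderiv ℂ g z v) 0 := by
      have h1 : HasFDerivAt g (fderiv ℂ g z) ((fun t : ℂ => z + t • v) 0) := by
        simp only [zero_smul, add_zero]
        exact (hg.differentiableAt (isOpen_ball.mem_nhds hzρ)).hasFDerivAt
      have h2 : HasDerivAt (fun t : ℂ => z + t • v) v 0 := by
        simpa using ((hasDerivAt_id (0:ℂ)).smul_const v).const_add z
      exact h1.comp_hasDerivAt 0 h2
    have hd0 : deriv φ 0 = fderiv ℂ g z v := hDφ.deriv
    have hest : ∀ η : ℝ, 0 < η → ‖fderiv ℂ g z v‖ ≤ (2*M + η) / (ρ/2) := by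
      intro η hη
      have hmaps : MapsTo φ (ball (0:ℂ) (ρ/2)) (ball (φ 0) (2*M + η)) := by
        intro t ht
        rw [mem_ball]
        calc dist (φ t) (φ 0) ≤ ‖φ t‖ + ‖φ 0‖ := dist_le_norm_add_norm _ _
          _ ≤ M + M := add_le_add (hb _ (hmem t ht)) (hb _ (by simpa using hzρ))
          _ < 2*M + η := by linarith
      have := Complex.norm_deriv_le_div_of_mapsTo_ball hφd (hmaps.mono_right ball_subset_closedBall) hδ
      rwa [hd0] at this
    have : ‖fderiv ℂ g z v‖ ≤ 2*M / (ρ/2) := by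
      refine le_of_forall_pos_le_add fun ε hε => ?_
      have := hest (ε * (ρ/2)) (by positivity)
      calc ‖fderiv ℂ g z v‖ ≤ (2*M + ε * (ρ/2)) / (ρ/2) := this
        _ = 2*M/(ρ/2) + ε := by field_simp
    calc ‖fderiv ℂ g z v‖ ≤ 2*M/(ρ/2) := this
      _ = 4 * M / ρ := by field_simp; ring
  refine ContinuousLinearMap.opNorm_le_bound _ (by positivity) fun v => ?_
  rcases eq_or_ne v 0 with rfl | hv0
  · simp
  · have hnv : (0:ℝ) < ‖v‖ := norm_pos_iff.2 hv0
    have := key (‖v‖⁻¹ • v) (by rw [norm_smul, norm_inv, norm_norm, inv_mul_cancel₀ hnv.ne'])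
    have hlin : fderiv ℂ g z v = ‖v‖ • fderiv ℂ g z (‖v‖⁻¹ • v) := by
      rw [(fderiv ℂ g z).map_smul_of_tower, smul_smul]
      rw [mul_inv_cancel₀ hnv.ne', one_smul]
    rw [hlin, norm_smul, norm_norm]
    calc ‖v‖ * ‖fderiv ℂ g z (‖v‖⁻¹ • v)‖ ≤ ‖v‖ * (4*M/ρ) := by
          exact mul_le_mul_of_nonneg_left this hnv.le
      _ = 4*M/ρ * ‖v‖ := by ring

lemma inv_pow_bound {k : ℕ} (u : ((Fin k → ℂ) →L[ℂ] (Fin k → ℂ))ˣ)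
    (b : Module.Basis (Fin k) ℂ (Fin k → ℂ))
    (hb : ∀ i, ∃ μ : ℂ, (u : (Fin k → ℂ) →L[ℂ] (Fin k → ℂ)) (b i) = μ • b i)
    (heig : ∀ μ ∈ spectrum ℂ (u : (Fin k → ℂ) →L[ℂ] (Fin k → ℂ)), ‖μ‖ = 1) :
    ∃ C : ℝ, 0 ≤ C ∧ ∀ (j : ℕ) (z : Fin k → ℂ),
      ‖((u⁻¹ ^ j : ((Fin k → ℂ) →L[ℂ] (Fin k → ℂ))ˣ) : (Fin k → ℂ) →L[ℂ] (Fin k → ℂ)) z‖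
        ≤ C * ‖z‖ := by
  choose μ hμ using hb
  have hμ1 : ∀ i, ‖μ i‖ = 1 := by
    intro i
    refine heig (μ i) ?_
    rw [spectrum.mem_iff]
    rintro ⟨v, hv⟩
    have h0 : (algebraMap ℂ ((Fin k → ℂ) →L[ℂ] (Fin k → ℂ)) (μ i) -
        (u : (Fin k → ℂ) →L[ℂ] (Fin k → ℂ))) (b i) = 0 := by
      rw [ContinuousLinearMap.sub_apply, Algebra.algebraMap_eq_smul_one,
        ContinuousLinearMap.smul_apply, ContinuousLinearMap.one_apply, hμ i, sub_self]
    have hbi : b i = 0 := by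
      have h1 : ((↑(v⁻¹ * v) : (Fin k → ℂ) →L[ℂ] (Fin k → ℂ))) (b i) = b i := by
        rw [inv_mul_cancel v]; simp
      rw [Units.val_mul, ContinuousLinearMap.mul_apply, hv, h0, map_zero] at h1
      exact h1.symm
    exact b.ne_zero i hbi
  have hμ0 : ∀ i, μ i ≠ 0 := fun i h => by
    have := hμ1 i; rw [h, norm_zero] at this; linarith
  have hinv : ∀ i, ((u⁻¹ : _ˣ) : (Fin k → ℂ) →L[ℂ] (Fin k → ℂ)) (b i) = (μ i)⁻¹ • b i := by
    intro i
    have h1 : ((↑(u⁻¹ * u) : (Fin k → ℂ) →L[ℂ] (Fin k → ℂ))) (b i) = b i := by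
      rw [inv_mul_cancel u]; simp
    rw [Units.val_mul, ContinuousLinearMap.mul_apply, hμ i, map_smul] at h1
    have h2 := congrArg (fun w => (μ i)⁻¹ • w) h1
    simpa [smul_smul, inv_mul_cancel₀ (hμ0 i)] using h2
  have hpow : ∀ (j : ℕ) (i : Fin k),
      ((u⁻¹ ^ j : _ˣ) : (Fin k → ℂ) →L[ℂ] (Fin k → ℂ)) (b i) = ((μ i)⁻¹) ^ j • b i := by
    intro j
    induction j with
    | zero => intro i; simp
    | succ j ih =>
      intro i
      have : (u⁻¹ ^ (j+1) : _ˣ) = u⁻¹ ^ j * u⁻¹ := by rw [pow_succ]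
      rw [this, Units.val_mul, ContinuousLinearMap.mul_apply, hinv i, map_smul, ih i,
        smul_smul, pow_succ, mul_comm]
  refine ⟨∑ i, ‖LinearMap.toContinuousLinearMap (b.coord i)‖ * ‖b i‖, ?_, ?_⟩
  · exact Finset.sum_nonneg fun i _ => mul_nonneg (norm_nonneg _) (norm_nonneg _)
  · intro j z
    conv_lhs => rw [← b.sum_repr z, map_sum]
    calc ‖∑ i, ((u⁻¹ ^ j : _ˣ) : (Fin k → ℂ) →L[ℂ] (Fin k → ℂ)) (b.repr z i • b i)‖
        ≤ ∑ i, ‖((u⁻¹ ^ j : _ˣ) : (Fin k → ℂ) →L[ℂ] (Fin k → ℂ)) (b.repr z i • b i)‖ :=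
          norm_sum_le _ _
      _ ≤ ∑ i, (‖LinearMap.toContinuousLinearMap (b.coord i)‖ * ‖b i‖) * ‖z‖ := by
          refine Finset.sum_le_sum fun i _ => ?_
          rw [map_smul, hpow j i, smul_smul, norm_smul]
          have h2 : ‖b.repr z i * ((μ i)⁻¹)^j‖ = ‖b.repr z i‖ := by
            rw [norm_mul, norm_pow, norm_inv, hμ1 i]; simp
          rw [h2]
          have h3 : ‖b.repr z i‖ ≤ ‖LinearMap.toContinuousLinearMap (b.coord i)‖ * ‖z‖ := by
            have := (LinearMap.toContinuousLinearMap (b.coord i)).le_opNorm z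
            simpa [Module.Basis.coord_apply] using this
          calc ‖b.repr z i‖ * ‖b i‖ ≤ (‖LinearMap.toContinuousLinearMap (b.coord i)‖ * ‖z‖) * ‖b i‖ :=
                mul_le_mul_of_nonneg_right h3 (norm_nonneg _)
            _ = ‖LinearMap.toContinuousLinearMap (b.coord i)‖ * ‖b i‖ * ‖z‖ := by ring
      _ = (∑ i, ‖LinearMap.toContinuousLinearMap (b.coord i)‖ * ‖b i‖) * ‖z‖ := by
          rw [Finset.sum_mul]


lemma ultra_lim {E : Type*} [NormedAddCommGroup E] [ProperSpace E]
    (𝒰 : Ultrafilter ℕ) (g : ℕ → E) (c : ℝ) (hg : ∀ N, ‖g N‖ ≤ c) :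
    ∃ a, Tendsto g (𝒰 : Filter ℕ) (𝓝 a) := by
  have h : ↑(𝒰.map g) ≤ 𝓟 (closedBall (0:E) c) := by
    rw [le_principal_iff]
    exact Filter.mem_map.2 (Filter.univ_mem' fun N => by
      simpa [mem_closedBall, dist_eq_norm] using hg N)
  obtain ⟨a, -, ha⟩ := (isCompact_closedBall (0:E) c).ultrafilter_le_nhds (𝒰.map g) h
  exact ⟨a, ha⟩

/-- Linearization: let `f` be holomorphic on a bounded open `U ∋ 0` in `ℂ^k` with
`f 0 = 0`, `A = Df(0)` invertible, diagonalizable, with all eigenvalues of modulus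
`1`, and suppose all forward iterates of `f` map `B(0,r)` into `B(0,R) ⊆ U`. Then `f`
is linearizable near `0`: there is a holomorphic `h` near `0` with `h 0 = 0`,
`Dh(0) = Id` and `h ∘ f = A ∘ h`. -/
theorem stmt9 {k : ℕ} (U : Set (Fin k → ℂ)) (f : (Fin k → ℂ) → (Fin k → ℂ))
    (r R : ℝ)
    (hUopen : IsOpen U) (hUbdd : Bornology.IsBounded U)
    (h0U : (0 : Fin k → ℂ) ∈ U)
    (hf : DifferentiableOn ℂ f U) (hf0 : f 0 = 0)
    (hA : IsUnit (fderiv ℂ f 0))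
    (heig : ∀ μ ∈ spectrum ℂ (fderiv ℂ f 0), ‖μ‖ = 1)
    (hdiag : ∃ b : Module.Basis (Fin k) ℂ (Fin k → ℂ),
      ∀ i, ∃ μ : ℂ, fderiv ℂ f 0 (b i) = μ • b i)
    (hr : 0 < r) (hrR : r < R) (hRU : closedBall (0 : Fin k → ℂ) R ⊆ U)
    (horbit : ∀ n : ℕ, f^[n] '' closedBall (0 : Fin k → ℂ) r ⊆
      closedBall (0 : Fin k → ℂ) R) :
    ∃ h : (Fin k → ℂ) → (Fin k → ℂ), ∃ r' > (0:ℝ), ∃ ε > (0:ℝ), ε ≤ r' ∧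
      DifferentiableOn ℂ h (ball (0 : Fin k → ℂ) r') ∧
      MapsTo f (ball (0 : Fin k → ℂ) ε) (ball (0 : Fin k → ℂ) r') ∧
      h 0 = 0 ∧ fderiv ℂ h 0 = ContinuousLinearMap.id ℂ (Fin k → ℂ) ∧
      ∀ z ∈ ball (0 : Fin k → ℂ) ε, h (f z) = fderiv ℂ f 0 (h z) := by
  have hR : 0 < R := hr.trans hrR
  obtain ⟨u, hu⟩ := hA
  obtain ⟨b, hbdiag⟩ := hdiag
  obtain ⟨C, hC0, hC⟩ := inv_pow_bound u b (fun i => by rw [hu]; exact hbdiag i)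
    (fun μ' hμ' => heig μ' (by rwa [hu] at hμ'))
  set M := C * R with hMdef
  have hM0 : 0 ≤ M := mul_nonneg hC0 hR.le
  -- iterates
  have hit0 : ∀ n : ℕ, f^[n] 0 = 0 := fun n => Function.iterate_fixed hf0 n
  have horb : ∀ n : ℕ, ∀ z ∈ closedBall (0 : Fin k → ℂ) r, f^[n] z ∈ closedBall (0 : Fin k → ℂ) R :=
    fun n z hz => horbit n ⟨z, hz, rfl⟩
  have hUi : ∀ n : ℕ, ∀ z ∈ closedBall (0 : Fin k → ℂ) r, DifferentiableAt ℂ f^[n] z := by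
    intro n
    induction n with
    | zero => intro z _; simpa [Function.iterate_zero] using differentiableAt_id'
    | succ n ih =>
      intro z hz
      rw [Function.iterate_succ']
      exact DifferentiableAt.comp z
        (hf.differentiableAt (hUopen.mem_nhds (hRU (horb n z hz)))) (ih z hz)
  -- the Cesàro averages
  set F : ℕ → (Fin k → ℂ) → (Fin k → ℂ) := fun N z =>
    (N : ℂ)⁻¹ • ∑ j ∈ Finset.range N,
      ((u⁻¹ ^ j : ((Fin k → ℂ) →L[ℂ] (Fin k → ℂ))ˣ) : (Fin k → ℂ) →L[ℂ] (Fin k → ℂ)) (f^[j] z)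
    with hFdef
  have hFb : ∀ N : ℕ, ∀ z ∈ closedBall (0 : Fin k → ℂ) r, ‖F N z‖ ≤ M := by
    intro N z hz
    rcases Nat.eq_zero_or_pos N with rfl | hN
    · simpa [hFdef] using hM0
    · have hterm : ∀ j ∈ Finset.range N,
          ‖((u⁻¹ ^ j : ((Fin k → ℂ) →L[ℂ] (Fin k → ℂ))ˣ) : (Fin k → ℂ) →L[ℂ] (Fin k → ℂ))
            (f^[j] z)‖ ≤ M := by
        intro j _
        calc ‖_‖ ≤ C * ‖f^[j] z‖ := hC j _
          _ ≤ C * R := mul_le_mul_of_nonneg_left (mem_closedBall_zero_iff.1 (horb j z hz)) hC0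
      calc ‖F N z‖ = ‖(N:ℂ)⁻¹‖ * ‖∑ j ∈ Finset.range N,
            ((u⁻¹ ^ j : ((Fin k → ℂ) →L[ℂ] (Fin k → ℂ))ˣ) : (Fin k → ℂ) →L[ℂ] (Fin k → ℂ))
              (f^[j] z)‖ := norm_smul _ _
        _ ≤ (N:ℝ)⁻¹ * (N * M) := by
            refine mul_le_mul ?_ ?_ (norm_nonneg _) (by positivity)
            · rw [norm_inv]; simp
            · calc ‖∑ j ∈ Finset.range N, _‖ ≤ ∑ j ∈ Finset.range N, ‖((u⁻¹ ^ j :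
                  ((Fin k → ℂ) →L[ℂ] (Fin k → ℂ))ˣ) : (Fin k → ℂ) →L[ℂ] (Fin k → ℂ)) (f^[j] z)‖ :=
                  norm_sum_le _ _
                _ ≤ ∑ _j ∈ Finset.range N, M := Finset.sum_le_sum hterm
                _ = N * M := by rw [Finset.sum_const, Finset.card_range, nsmul_eq_mul]
        _ = M := by
            rw [← mul_assoc, inv_mul_cancel₀ (by exact_mod_cast hN.ne' : (N:ℝ) ≠ 0), one_mul]
  have hFAt : ∀ N : ℕ, ∀ z ∈ ball (0 : Fin k → ℂ) r, DifferentiableAt ℂ (F N) z := by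
    intro N z hz
    refine DifferentiableAt.fun_const_smul ?_ _
    refine DifferentiableAt.fun_sum fun j _ => ?_
    exact (ContinuousLinearMap.differentiable _).differentiableAt.comp z
      (hUi j z (ball_subset_closedBall hz))
  have hFd : ∀ N : ℕ, DifferentiableOn ℂ (F N) (ball (0 : Fin k → ℂ) r) :=
    fun N z hz => (hFAt N z hz).differentiableWithinAt
  -- derivative of iterates at 0
  have hDit : ∀ j : ℕ, HasFDerivAt f^[j]
      ((u ^ j : ((Fin k → ℂ) →L[ℂ] (Fin k → ℂ))ˣ) : (Fin k → ℂ) →L[ℂ] (Fin k → ℂ)) 0 := by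
    intro j
    induction j with
    | zero =>
      have : ((u ^ 0 : ((Fin k → ℂ) →L[ℂ] (Fin k → ℂ))ˣ) : (Fin k → ℂ) →L[ℂ] (Fin k → ℂ))
          = ContinuousLinearMap.id ℂ (Fin k → ℂ) := by
        rw [pow_zero, Units.val_one]; rfl
      rw [this, Function.iterate_zero]
      exact hasFDerivAt_id 0
    | succ j ih =>
      rw [Function.iterate_succ']
      have h1 : HasFDerivAt f ((u : (Fin k → ℂ) →L[ℂ] (Fin k → ℂ))) (f^[j] 0) := by
        rw [hit0 j, hu]
        exact (hf.differentiableAt (hUopen.mem_nhds h0U)).hasFDerivAt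
      have h2 := h1.comp 0 ih
      have h3 : (u : (Fin k → ℂ) →L[ℂ] (Fin k → ℂ)).comp
          ((u ^ j : ((Fin k → ℂ) →L[ℂ] (Fin k → ℂ))ˣ) : (Fin k → ℂ) →L[ℂ] (Fin k → ℂ))
          = ((u ^ (j+1) : ((Fin k → ℂ) →L[ℂ] (Fin k → ℂ))ˣ) : (Fin k → ℂ) →L[ℂ] (Fin k → ℂ)) := by
        rw [pow_succ', Units.val_mul]; rfl
      rwa [h3] at h2
  have hDF : ∀ N : ℕ, 1 ≤ N → HasFDerivAt (F N) (ContinuousLinearMap.id ℂ (Fin k → ℂ)) 0 := by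
    intro N hN
    have hterm : ∀ j : ℕ, HasFDerivAt
        (fun z => ((u⁻¹ ^ j : ((Fin k → ℂ) →L[ℂ] (Fin k → ℂ))ˣ) : (Fin k → ℂ) →L[ℂ] (Fin k → ℂ))
          (f^[j] z))
        (ContinuousLinearMap.id ℂ (Fin k → ℂ)) 0 := by
      intro j
      have h1 := (((u⁻¹ ^ j : ((Fin k → ℂ) →L[ℂ] (Fin k → ℂ))ˣ) :
        (Fin k → ℂ) →L[ℂ] (Fin k → ℂ)).hasFDerivAt (x := f^[j] 0)).comp 0 (hDit j)
      have h2 : ((u⁻¹ ^ j : ((Fin k → ℂ) →L[ℂ] (Fin k → ℂ))ˣ) :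
          (Fin k → ℂ) →L[ℂ] (Fin k → ℂ)).comp
          ((u ^ j : ((Fin k → ℂ) →L[ℂ] (Fin k → ℂ))ˣ) : (Fin k → ℂ) →L[ℂ] (Fin k → ℂ))
          = ContinuousLinearMap.id ℂ (Fin k → ℂ) := by
        have : (u⁻¹ ^ j) * (u ^ j) = (1 : ((Fin k → ℂ) →L[ℂ] (Fin k → ℂ))ˣ) := by
          rw [inv_pow, inv_mul_cancel]
        calc _ = ((u⁻¹ ^ j * u ^ j : ((Fin k → ℂ) →L[ℂ] (Fin k → ℂ))ˣ) :
              (Fin k → ℂ) →L[ℂ] (Fin k → ℂ)) := by rw [Units.val_mul]; rfl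
          _ = _ := by rw [this, Units.val_one]; rfl
      rwa [h2] at h1
    have hsum : HasFDerivAt
        (fun z => ∑ j ∈ Finset.range N,
          ((u⁻¹ ^ j : ((Fin k → ℂ) →L[ℂ] (Fin k → ℂ))ˣ) : (Fin k → ℂ) →L[ℂ] (Fin k → ℂ))
            (f^[j] z))
        (∑ _j ∈ Finset.range N, ContinuousLinearMap.id ℂ (Fin k → ℂ)) 0 :=
      HasFDerivAt.fun_sum fun j _ => hterm j
    have hsmul := hsum.const_smul ((N:ℂ)⁻¹)
    have heq : (N:ℂ)⁻¹ • (∑ _j ∈ Finset.range N, ContinuousLinearMap.id ℂ (Fin k → ℂ))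
        = ContinuousLinearMap.id ℂ (Fin k → ℂ) := by
      have hNne : (N:ℂ) ≠ 0 := by exact_mod_cast (Nat.one_le_iff_ne_zero.1 hN)
      rw [Finset.sum_const, Finset.card_range,
        ← Nat.cast_smul_eq_nsmul ℂ N (ContinuousLinearMap.id ℂ (Fin k → ℂ)),
        smul_smul, inv_mul_cancel₀ hNne, one_smul]
    rwa [heq] at hsmul
  -- ultrafilter limit
  obtain ⟨𝒰, h𝒰⟩ := Ultrafilter.exists_le (atTop : Filter ℕ)
  set h : (Fin k → ℂ) → (Fin k → ℂ) := fun z => limUnder (𝒰 : Filter ℕ) (fun N => F N z)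
    with hhdef
  have htend : ∀ z ∈ closedBall (0 : Fin k → ℂ) r,
      Tendsto (fun N => F N z) (𝒰 : Filter ℕ) (𝓝 (h z)) := by
    intro z hz
    obtain ⟨a, ha⟩ := ultra_lim 𝒰 (fun N => F N z) M (fun N => hFb N z hz)
    have hza : h z = a := by rw [hhdef]; exact ha.limUnder_eq
    rwa [hza]
  have hF0 : ∀ N, F N 0 = 0 := by
    intro N
    simp [hFdef, hit0]
  have hh0 : h 0 = 0 := by
    refine tendsto_nhds_unique (htend 0 (mem_closedBall_self hr.le)) ?_
    simpa [hF0] using (tendsto_const_nhds : Tendsto (fun _ : ℕ => (0 : Fin k → ℂ)) _ _)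
  -- Lipschitz bounds
  set B := 4 * M / r with hBdef
  have hB0 : 0 ≤ B := by positivity
  have hfderiv_bd : ∀ N, ∀ z ∈ ball (0 : Fin k → ℂ) (r/2), ‖fderiv ℂ (F N) z‖ ≤ B :=
    fun N => cauchy_fderiv_bound (F N) r M hr hM0 (hFd N)
      (fun z hz => hFb N z (ball_subset_closedBall hz))
  have hballs : ball (0 : Fin k → ℂ) (r/2) ⊆ ball (0 : Fin k → ℂ) r :=
    ball_subset_ball (by linarith)
  have hLipF : ∀ N, ∀ z ∈ ball (0 : Fin k → ℂ) (r/2), ∀ w ∈ ball (0 : Fin k → ℂ) (r/2),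
      ‖F N z - F N w‖ ≤ B * ‖z - w‖ := by
    intro N z hz w hw
    exact (convex_ball (0 : Fin k → ℂ) (r/2)).norm_image_sub_le_of_norm_fderiv_le
      (fun x hx => hFAt N x (hballs hx)) (fun x hx => hfderiv_bd N x hx) hw hz
  have hcbr : closedBall (0 : Fin k → ℂ) (r/4) ⊆ ball (0 : Fin k → ℂ) (r/2) := by
    intro x hx
    rw [mem_closedBall_zero_iff] at hx
    rw [mem_ball_zero_iff]
    linarith
  have hcbr' : ball (0 : Fin k → ℂ) (r/2) ⊆ closedBall (0 : Fin k → ℂ) r := by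
    intro x hx
    rw [mem_ball_zero_iff] at hx
    rw [mem_closedBall_zero_iff]
    linarith
  have hLiph : ∀ z ∈ ball (0 : Fin k → ℂ) (r/2), ∀ w ∈ ball (0 : Fin k → ℂ) (r/2),
      ‖h z - h w‖ ≤ B * ‖z - w‖ := by
    intro z hz w hw
    have h1 : Tendsto (fun N => ‖F N z - F N w‖) (𝒰 : Filter ℕ) (𝓝 ‖h z - h w‖) :=
      ((htend z (hcbr' hz)).sub (htend w (hcbr' hw))).norm
    exact le_of_tendsto h1 (Eventually.of_forall fun N => hLipF N z hz w hw)
  -- uniform convergence on closedBall (r/4)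
  have hUC : ∀ ε > (0:ℝ), ∀ᶠ N in (𝒰 : Filter ℕ),
      ∀ x ∈ closedBall (0 : Fin k → ℂ) (r/4), dist (h x) (F N x) < ε := by
    intro ε hε
    set δ := ε / (3 * (B+1)) with hδdef
    have hδ0 : 0 < δ := by positivity
    obtain ⟨t, hts, htfin, hcov⟩ :=
      (isCompact_closedBall (0 : Fin k → ℂ) (r/4)).finite_cover_balls hδ0
    have hev : ∀ᶠ N in (𝒰 : Filter ℕ), ∀ x ∈ htfin.toFinset, dist (h x) (F N x) < ε/3 := by
      rw [Filter.eventually_all_finset]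
      intro x hx
      have hx' : x ∈ closedBall (0 : Fin k → ℂ) r :=
        hcbr' (hcbr (hts (htfin.mem_toFinset.1 hx)))
      have h2 := (Metric.tendsto_nhds.1 (htend x hx')) (ε/3) (by positivity)
      filter_upwards [h2] with N hN using by rwa [dist_comm]
    filter_upwards [hev] with N hN y hy
    obtain ⟨x, hxt, hyx⟩ : ∃ x ∈ t, y ∈ ball x δ := by simpa using hcov hy
    have hx2 : x ∈ ball (0 : Fin k → ℂ) (r/2) := hcbr (hts hxt)
    have hy2 : y ∈ ball (0 : Fin k → ℂ) (r/2) := hcbr hy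
    have hd1 : dist (h y) (h x) ≤ B * δ := by
      rw [dist_eq_norm]
      calc ‖h y - h x‖ ≤ B * ‖y - x‖ := hLiph y hy2 x hx2
        _ ≤ B * δ := mul_le_mul_of_nonneg_left (by rw [← dist_eq_norm]; exact (mem_ball.1 hyx).le) hB0
    have hd3 : dist (F N x) (F N y) ≤ B * δ := by
      rw [dist_eq_norm]
      calc ‖F N x - F N y‖ ≤ B * ‖x - y‖ := hLipF N x hx2 y hy2
        _ ≤ B * δ := by
            refine mul_le_mul_of_nonneg_left ?_ hB0
            rw [← dist_eq_norm, dist_comm]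
            exact (mem_ball.1 hyx).le
    have hd2 : dist (h x) (F N x) < ε/3 := hN x (htfin.mem_toFinset.2 hxt)
    have hBδ : B * δ ≤ ε/3 := by
      have hB1 : B + 1 ≠ 0 := by positivity
      calc B * δ ≤ (B+1) * δ := mul_le_mul_of_nonneg_right (by linarith) hδ0.le
        _ = ε/3 := by rw [hδdef]; field_simp
    calc dist (h y) (F N y) ≤ dist (h y) (h x) + dist (h x) (F N x) + dist (F N x) (F N y) :=
        dist_triangle4 _ _ _ _
      _ < ε := by linarith
  -- limit of derivatives
  haveI hPS : ProperSpace ((Fin k → ℂ) →L[ℂ] (Fin k → ℂ)) := by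
    haveI : FiniteDimensional ℂ ((Fin k → ℂ) →L[ℂ] (Fin k → ℂ)) := by infer_instance
    exact FiniteDimensional.proper ℂ _
  set G : (Fin k → ℂ) → ((Fin k → ℂ) →L[ℂ] (Fin k → ℂ)) := fun z =>
    limUnder (𝒰 : Filter ℕ) (fun N => fderiv ℂ (F N) z) with hGdef
  have hGtend : ∀ z ∈ ball (0 : Fin k → ℂ) (r/2),
      Tendsto (fun N => fderiv ℂ (F N) z) (𝒰 : Filter ℕ) (𝓝 (G z)) := by
    intro z hz
    obtain ⟨a, ha⟩ := ultra_lim 𝒰 _ B (fun N => hfderiv_bd N z hz)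
    have hza : G z = a := by rw [hGdef]; exact ha.limUnder_eq
    rwa [hza]
  have hball8 : ball (0 : Fin k → ℂ) (r/8) ⊆ ball (0 : Fin k → ℂ) (r/2) :=
    ball_subset_ball (by linarith)
  have hball84 : ball (0 : Fin k → ℂ) (r/4) ⊆ ball (0 : Fin k → ℂ) r :=
    ball_subset_ball (by linarith)
  have hUCd : TendstoUniformlyOn (fun N z => fderiv ℂ (F N) z) G (𝒰 : Filter ℕ)
      (ball (0 : Fin k → ℂ) (r/8)) := by
    rw [Metric.tendstoUniformlyOn_iff]
    intro ε hε
    set ε' := ε * r / 100 with hε'def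
    have hε'0 : 0 < ε' := by positivity
    have hS := hUC ε' hε'0
    filter_upwards [hS] with N hN
    intro z hz
    have hz2 : z ∈ ball (0 : Fin k → ℂ) (r/2) := hball8 hz
    have hz8' : z ∈ ball (0 : Fin k → ℂ) ((r/4)/2) := by
      have hhalf : (r/4)/2 = r/8 := by ring
      rw [hhalf]; exact hz
    have hzr' : z ∈ ball (0 : Fin k → ℂ) r := hballs hz2
    have hbound : ∀ N', (∀ x ∈ closedBall (0 : Fin k → ℂ) (r/4), dist (h x) (F N' x) < ε') →
        dist (fderiv ℂ (F N') z) (fderiv ℂ (F N) z) ≤ 4 * (2*ε') / (r/4) := by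
      intro N' hN'
      have hgd : DifferentiableOn ℂ (fun x => F N' x - F N x) (ball (0 : Fin k → ℂ) (r/4)) :=
        ((hFd N').mono hball84).sub ((hFd N).mono hball84)
      have hgb : ∀ x ∈ ball (0 : Fin k → ℂ) (r/4), ‖F N' x - F N x‖ ≤ 2*ε' := by
        intro x hx
        have h1 := hN' x (ball_subset_closedBall hx)
        have h2 := hN x (ball_subset_closedBall hx)
        calc ‖F N' x - F N x‖ = dist (F N' x) (F N x) := (dist_eq_norm _ _).symm
          _ ≤ dist (F N' x) (h x) + dist (h x) (F N x) := dist_triangle _ _ _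
          _ ≤ 2*ε' := by rw [dist_comm (F N' x) (h x)]; linarith
      have hce := cauchy_fderiv_bound _ (r/4) (2*ε') (by positivity) (by positivity)
        hgd hgb z hz8'
      have hsub : fderiv ℂ (fun x => F N' x - F N x) z
          = fderiv ℂ (F N') z - fderiv ℂ (F N) z :=
        fderiv_sub (hFAt N' z hzr') (hFAt N z hzr')
      rw [hsub] at hce
      rw [dist_eq_norm]
      exact hce
    have htendd : Tendsto (fun N' => dist (fderiv ℂ (F N') z) (fderiv ℂ (F N) z))
        (𝒰 : Filter ℕ) (𝓝 (dist (G z) (fderiv ℂ (F N) z))) :=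
      (hGtend z hz2).dist tendsto_const_nhds
    have hle : dist (G z) (fderiv ℂ (F N) z) ≤ 4*(2*ε')/(r/4) :=
      le_of_tendsto htendd (hS.mono hbound)
    calc dist (G z) (fderiv ℂ (F N) z) ≤ 4*(2*ε')/(r/4) := hle
      _ < ε := by
          rw [hε'def]
          rw [div_lt_iff₀ (by positivity : (0:ℝ) < r/4)]
          nlinarith [hr, hε]
  have hhd : ∀ z ∈ ball (0 : Fin k → ℂ) (r/8), HasFDerivAt h (G z) z := by
    intro z hz
    refine hasFDerivAt_of_tendstoUniformlyOn isOpen_ball hUCd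
      (fun N x hx => (hFAt N x (hballs (hball8 hx))).hasFDerivAt)
      (fun x hx => htend x (hcbr' (hball8 hx))) hz
  have hhdiff : DifferentiableOn ℂ h (ball (0 : Fin k → ℂ) (r/8)) :=
    fun z hz => (hhd z hz).differentiableAt.differentiableWithinAt
  have hG0 : G 0 = ContinuousLinearMap.id ℂ (Fin k → ℂ) := by
    have h0mem : (0 : Fin k → ℂ) ∈ ball (0 : Fin k → ℂ) (r/2) := mem_ball_self (by positivity)
    refine tendsto_nhds_unique (hGtend 0 h0mem) ?_
    have hev : ∀ᶠ N in (𝒰 : Filter ℕ),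
        fderiv ℂ (F N) 0 = ContinuousLinearMap.id ℂ (Fin k → ℂ) := by
      have hev' : ∀ᶠ N in (atTop : Filter ℕ),
          fderiv ℂ (F N) 0 = ContinuousLinearMap.id ℂ (Fin k → ℂ) := by
        filter_upwards [eventually_ge_atTop 1] with N hN using (hDF N hN).fderiv
      exact h𝒰 hev'
    exact Tendsto.congr' (hev.mono fun N hN => hN.symm) tendsto_const_nhds
  have hfd0 : fderiv ℂ h 0 = ContinuousLinearMap.id ℂ (Fin k → ℂ) := by
    rw [(hhd 0 (mem_ball_self (by positivity))).fderiv, hG0]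
  -- choice of ε
  have hfc : ContinuousAt f 0 := (hf.differentiableAt (hUopen.mem_nhds h0U)).continuousAt
  obtain ⟨δf, hδf0, hδf⟩ := Metric.continuousAt_iff.1 hfc (r/8) (by positivity)
  have hε0 : 0 < min δf (r/8) := lt_min hδf0 (by positivity)
  have hmaps : MapsTo f (ball (0 : Fin k → ℂ) (min δf (r/8))) (ball (0 : Fin k → ℂ) (r/8)) := by
    intro z hz
    have h1 : dist z 0 < δf := lt_of_lt_of_le (mem_ball.1 hz) (min_le_left _ _)
    have h2 := hδf h1
    rw [hf0] at h2
    exact mem_ball.2 h2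
  refine ⟨h, r/8, by positivity, min δf (r/8), hε0, min_le_right _ _, hhdiff, hmaps, hh0, hfd0, ?_⟩
  -- functional equation
  intro z hz
  have hzr : z ∈ closedBall (0 : Fin k → ℂ) r := by
    have h1 : ‖z‖ < min δf (r/8) := mem_ball_zero_iff.1 hz
    have h2 : min δf (r/8) ≤ r/8 := min_le_right _ _
    rw [mem_closedBall_zero_iff]
    linarith
  have hfzr : f z ∈ closedBall (0 : Fin k → ℂ) r := hcbr' (hball8 (hmaps hz))
  set T : ℕ → ((Fin k → ℂ) →L[ℂ] (Fin k → ℂ)) := fun j =>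
    ((u⁻¹ ^ j : ((Fin k → ℂ) →L[ℂ] (Fin k → ℂ))ˣ) : (Fin k → ℂ) →L[ℂ] (Fin k → ℂ)) with hTdef
  set g : ℕ → (Fin k → ℂ) := fun j => T j (f^[j] z) with hgdef
  have hg0 : g 0 = z := by simp [hgdef, hTdef]
  have hstep : ∀ j : ℕ, T j (f^[j] (f z)) = (u : (Fin k → ℂ) →L[ℂ] (Fin k → ℂ)) (g (j+1)) := by
    intro j
    have h1 : f^[j] (f z) = f^[j+1] z := (Function.iterate_succ_apply f j z).symm
    have h2 : u * u⁻¹ ^ (j+1) = u⁻¹ ^ j := by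
      rw [pow_succ' u⁻¹ j, ← mul_assoc, mul_inv_cancel, one_mul]
    calc T j (f^[j] (f z)) = T j (f^[j+1] z) := by rw [h1]
      _ = ((u * u⁻¹ ^ (j+1) : ((Fin k → ℂ) →L[ℂ] (Fin k → ℂ))ˣ) :
            (Fin k → ℂ) →L[ℂ] (Fin k → ℂ)) (f^[j+1] z) := by rw [h2]
      _ = (u : (Fin k → ℂ) →L[ℂ] (Fin k → ℂ)) (g (j+1)) := by
          rw [Units.val_mul, ContinuousLinearMap.mul_apply]
  have key : ∀ N : ℕ, F N (f z) = (u : (Fin k → ℂ) →L[ℂ] (Fin k → ℂ)) (F N z)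
      + (N:ℂ)⁻¹ • (u : (Fin k → ℂ) →L[ℂ] (Fin k → ℂ)) (g N - z) := by
    intro N
    have hsum : ∑ j ∈ Finset.range N, T j (f^[j] (f z))
        = (u : (Fin k → ℂ) →L[ℂ] (Fin k → ℂ)) (∑ j ∈ Finset.range N, g (j+1)) := by
      rw [map_sum]
      exact Finset.sum_congr rfl fun j _ => hstep j
    have hshift : ∑ j ∈ Finset.range N, g (j+1)
        = (∑ j ∈ Finset.range N, g j) + (g N - g 0) := by
      have h1 := Finset.sum_range_succ' g N
      have h2 := Finset.sum_range_succ g N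
      have h3 : (∑ j ∈ Finset.range N, g (j+1)) + g 0
          = (∑ j ∈ Finset.range N, g j) + g N := by rw [← h1, h2]
      have h4 := congrArg (fun w => w - g 0) h3
      simpa [add_sub_assoc] using h4
    calc F N (f z) = (N:ℂ)⁻¹ • ∑ j ∈ Finset.range N, T j (f^[j] (f z)) := rfl
      _ = (N:ℂ)⁻¹ • (u : (Fin k → ℂ) →L[ℂ] (Fin k → ℂ))
            ((∑ j ∈ Finset.range N, g j) + (g N - g 0)) := by rw [hsum, hshift]
      _ = (u : (Fin k → ℂ) →L[ℂ] (Fin k → ℂ)) (F N z)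
          + (N:ℂ)⁻¹ • (u : (Fin k → ℂ) →L[ℂ] (Fin k → ℂ)) (g N - z) := by
          rw [map_add, smul_add, hg0, map_smul]
  have herr : Tendsto (fun N : ℕ => (N:ℂ)⁻¹ •
      (u : (Fin k → ℂ) →L[ℂ] (Fin k → ℂ)) (g N - z)) atTop (𝓝 0) := by
    apply squeeze_zero_norm
      (a := fun N : ℕ => (N:ℝ)⁻¹ * (‖(u : (Fin k → ℂ) →L[ℂ] (Fin k → ℂ))‖ * (M + r)))
    · intro N
      rw [norm_smul]
      have h1 : ‖((N:ℕ):ℂ)⁻¹‖ = ((N:ℝ))⁻¹ := by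
        rw [norm_inv, Complex.norm_natCast]
      rw [h1]
      refine mul_le_mul_of_nonneg_left ?_ (by positivity)
      calc ‖(u : (Fin k → ℂ) →L[ℂ] (Fin k → ℂ)) (g N - z)‖
          ≤ ‖(u : (Fin k → ℂ) →L[ℂ] (Fin k → ℂ))‖ * ‖g N - z‖ :=
            ContinuousLinearMap.le_opNorm _ _
        _ ≤ ‖(u : (Fin k → ℂ) →L[ℂ] (Fin k → ℂ))‖ * (M + r) := by
            refine mul_le_mul_of_nonneg_left ?_ (norm_nonneg _)
            calc ‖g N - z‖ ≤ ‖g N‖ + ‖z‖ := norm_sub_le _ _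
              _ ≤ M + r := by
                  refine add_le_add ?_ (mem_closedBall_zero_iff.1 hzr)
                  calc ‖g N‖ ≤ C * ‖f^[N] z‖ := hC N _
                    _ ≤ C * R := mul_le_mul_of_nonneg_left
                        (mem_closedBall_zero_iff.1 (horb N z hzr)) hC0
    · simpa using tendsto_inv_atTop_nhds_zero_nat.mul_const
        (‖(u : (Fin k → ℂ) →L[ℂ] (Fin k → ℂ))‖ * (M + r))
  have h1 : Tendsto (fun N => F N (f z)) (𝒰 : Filter ℕ) (𝓝 (h (f z))) := htend (f z) hfzr
  have h2 : Tendsto (fun N => F N (f z)) (𝒰 : Filter ℕ)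
      (𝓝 ((u : (Fin k → ℂ) →L[ℂ] (Fin k → ℂ)) (h z) + 0)) := by
    have ha : Tendsto (fun N => (u : (Fin k → ℂ) →L[ℂ] (Fin k → ℂ)) (F N z)) (𝒰 : Filter ℕ)
        (𝓝 ((u : (Fin k → ℂ) →L[ℂ] (Fin k → ℂ)) (h z))) :=
      ((u : (Fin k → ℂ) →L[ℂ] (Fin k → ℂ)).continuous.tendsto _).comp (htend z hzr)
    have hb : Tendsto (fun N : ℕ => (N:ℂ)⁻¹ •
        (u : (Fin k → ℂ) →L[ℂ] (Fin k → ℂ)) (g N - z)) (𝒰 : Filter ℕ) (𝓝 0) :=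
      herr.mono_left h𝒰
    exact Tendsto.congr (fun N => (key N).symm) (ha.add hb)
  have hfin := tendsto_nhds_unique h1 h2
  rw [add_zero] at hfin
  rw [hfin, ← hu]
end
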